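/- Let A be a primitive axial algebra of Jordan type η over a field F with char F ≠ 2, let ℬ be a basis of A consisting of η-axes, and let (·,·) be the bilinear form on A determined by (b, c) = φ_b(c) for all b, c ∈ ℬ. Then for every η-axis a ∈ A, the eigenspaces A_1(a), A_0(a), A_η(a) of ad_a are pairwise orthogonal with respect to (·,·). -/

import Mathlib

universe u v

section Prelim

variable (F : Type u) {A : Type v} [Field F] [NonUnitalNonAssocCommRing A]
  [Module F A] [SMulCommClass F A A] [IsScalarTower F A A]

/-- The λ-eigenspace of the adjoint map `ad_a : x ↦ a * x`. -/
def eigSp (a : A) (l : F) : Submodule F A where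
  carrier := {x | a * x = l • x}
  add_mem' := by
    intro x y hx hy
    simp only [Set.mem_setOf_eq] at *
    rw [mul_add, hx, hy, smul_add]
  zero_mem' := by simp
  smul_mem' := by
    intro c x hx
    simp only [Set.mem_setOf_eq] at *
    rw [mul_smul_comm, hx, smul_smul, smul_smul, mul_comm]

/-- `a` is a (primitive) `η`-axis. -/
structure IsAxis (η : F) (a : A) : Prop where
  ne_zero : a ≠ 0
  idem : a * a = a
  decomp : eigSp F a 1 ⊔ eigSp F a 0 ⊔ eigSp F a η = ⊤
  prim : eigSp F a 1 = Submodule.span F {a}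
  f11 : ∀ x ∈ eigSp F a 1, ∀ y ∈ eigSp F a 1, x * y ∈ eigSp F a 1
  f00 : ∀ x ∈ eigSp F a 0, ∀ y ∈ eigSp F a 0, x * y ∈ eigSp F a 0
  f10 : ∀ x ∈ eigSp F a 1, ∀ y ∈ eigSp F a 0, x * y = 0
  fpe : ∀ x ∈ eigSp F a 1 ⊔ eigSp F a 0, ∀ y ∈ eigSp F a η, x * y ∈ eigSp F a η
  fee : ∀ x ∈ eigSp F a η, ∀ y ∈ eigSp F a η, x * y ∈ eigSp F a 1 ⊔ eigSp F a 0

/-- `τ` is the Miyamoto involution of the `η`-axis `a`. -/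
structure IsMiyamoto (η : F) (a : A) (τ : A → A) : Prop where
  fixes : ∀ x ∈ eigSp F a 1 ⊔ eigSp F a 0, τ x = x
  negates : ∀ x ∈ eigSp F a η, τ x = -x
  map_add : ∀ x y : A, τ (x + y) = τ x + τ y
  map_smul : ∀ (c : F) (x : A), τ (c • x) = c • τ x
  map_mul : ∀ x y : A, τ (x * y) = τ x * τ y
  bijective : Function.Bijective τ

/-- `c = φ_a(u)`, the projection of `u` to `F·a` w.r.t. the axis `a`. -/
def IsProjCoeff (η : F) (a u : A) (c : F) : Prop :=
  ∃ u0 ∈ eigSp F a 0, ∃ ue ∈ eigSp F a η, u = c • a + u0 + ue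

/-- `e` is an identity element of the subalgebra `N`. -/
def IsIdentOf (N : NonUnitalSubalgebra F A) (e : A) : Prop :=
  e ∈ N ∧ ∀ z ∈ N, e * z = z

/-- `ψ` is an `F`-algebra automorphism of `A`. -/
structure IsAlgAut (ψ : A → A) : Prop where
  map_add : ∀ x y : A, ψ (x + y) = ψ x + ψ y
  map_smul : ∀ (c : F) (x : A), ψ (c • x) = c • ψ x
  map_mul : ∀ x y : A, ψ (x * y) = ψ x * ψ y
  bijective : Function.Bijective ψ

/-- The graph `Δ_𝒜`: distinct axes are adjacent iff their product is nonzero. -/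
def axesGraph (𝒜 : Set A) : SimpleGraph 𝒜 where
  Adj x y := x ≠ y ∧ (x : A) * (y : A) ≠ 0
  symm := by
    constructor
    rintro x y ⟨hxy, hm⟩
    exact ⟨hxy.symm, by rwa [mul_comm]⟩
  loopless := by constructor; rintro x ⟨h, -⟩; exact h rfl

/-- Multiplication of the Jordan algebra of Clifford type `J(V,B) = F·e ⊕ V`. -/
def cliffMul {V : Type*} [AddCommGroup V] [Module F V]
    (B : V →ₗ[F] V →ₗ[F] F) (x y : F × V) : F × V :=
  (x.1 * y.1 + B x.2 y.2, x.1 • y.2 + y.1 • x.2)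

end Prelim


section Aux

variable {F : Type u} {A : Type v} [Field F] [NonUnitalNonAssocCommRing A]
  [Module F A] [SMulCommClass F A A] [IsScalarTower F A A]

lemma mem_eigSp {a x : A} {l : F} : x ∈ eigSp F a l ↔ a * x = l • x := Iff.rfl

lemma mem_eig0 {a x : A} (h : x ∈ eigSp F a (0:F)) : a * x = 0 := by
  simpa using (mem_eigSp.mp h)

variable {η : F}

lemma eig_comp_zero (hη0 : η ≠ 0) (hη1 : η ≠ 1) {a : A} (ha : IsAxis F η a)
    {c : F} {x0 xη : A} (h0 : x0 ∈ eigSp F a 0) (hη : xη ∈ eigSp F a η)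
    (h : c • a + x0 + xη = 0) : c = 0 ∧ x0 = 0 ∧ xη = 0 := by
  have h0' : a * x0 = 0 := mem_eig0 h0
  have hη' : a * xη = η • xη := hη
  have e1 : c • a + η • xη = 0 := by
    have := congrArg (fun z => a * z) h
    simpa [mul_add, mul_smul_comm, ha.idem, h0', hη'] using this
  have e2 : c • a + (η * η) • xη = 0 := by
    have := congrArg (fun z => a * z) e1
    simpa [mul_add, mul_smul_comm, ha.idem, hη', smul_smul] using this
  have hxη : xη = 0 := by
    have e3 : (η - η * η) • xη = 0 := by
      have h4 := congrArg₂ (· - ·) e1 e2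
      simpa [sub_smul] using h4
    have hne : η - η * η ≠ 0 := by
      have : η * (1 - η) ≠ 0 := mul_ne_zero hη0 (sub_ne_zero.mpr (Ne.symm hη1))
      ring_nf
      ring_nf at this
      exact this
    exact (smul_eq_zero.mp e3).resolve_left hne
  have hc : c = 0 := by
    have : c • a = 0 := by simpa [hxη] using e1
    exact (smul_eq_zero.mp this).resolve_right ha.ne_zero
  refine ⟨hc, ?_, hxη⟩
  simpa [hc, hxη] using h

lemma eig_comp_unique (hη0 : η ≠ 0) (hη1 : η ≠ 1) {a : A} (ha : IsAxis F η a)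
    {c c' : F} {x0 x0' xη xη' : A} (h0 : x0 ∈ eigSp F a 0) (h0' : x0' ∈ eigSp F a 0)
    (hη : xη ∈ eigSp F a η) (hη' : xη' ∈ eigSp F a η)
    (h : c • a + x0 + xη = c' • a + x0' + xη') :
    c = c' ∧ x0 = x0' ∧ xη = xη' := by
  have key := eig_comp_zero hη0 hη1 ha (sub_mem h0 h0') (sub_mem hη hη')
    (c := c - c') (by rw [sub_smul]; abel_nf; rw [← sub_eq_zero] at h; rw [← h]; abel)
  exact ⟨sub_eq_zero.mp key.1, sub_eq_zero.mp key.2.1, sub_eq_zero.mp key.2.2⟩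

lemma projCoeff_unique (hη0 : η ≠ 0) (hη1 : η ≠ 1) {a : A} (ha : IsAxis F η a) {u : A} {c c' : F}
    (h : IsProjCoeff F η a u c) (h' : IsProjCoeff F η a u c') : c = c' := by
  obtain ⟨u0, hu0, ue, hue, rfl⟩ := h
  obtain ⟨v0, hv0, ve, hve, h'⟩ := h'
  exact (eig_comp_unique hη0 hη1 ha hu0 hv0 hue hve h').1

end Aux
section Aux2

set_option linter.unusedSectionVars false

variable {F : Type u} {A : Type v} [Field F] [NonUnitalNonAssocCommRing A]
  [Module F A] [SMulCommClass F A A] [IsScalarTower F A A]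
  {η : F} {φ : A → A → F}

lemma phi_eig0 (hη0 : η ≠ 0) (hη1 : η ≠ 1)
    (hφ : ∀ a : A, IsAxis F η a → ∀ u : A, IsProjCoeff F η a u (φ a u))
    {a : A} (ha : IsAxis F η a) {y : A} (hy : y ∈ eigSp F a 0) : φ a y = 0 :=
  projCoeff_unique hη0 hη1 ha (hφ a ha y) ⟨y, hy, 0, zero_mem _, by simp⟩

lemma phi_eigE (hη0 : η ≠ 0) (hη1 : η ≠ 1)
    (hφ : ∀ a : A, IsAxis F η a → ∀ u : A, IsProjCoeff F η a u (φ a u))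
    {a : A} (ha : IsAxis F η a) {y : A} (hy : y ∈ eigSp F a η) : φ a y = 0 :=
  projCoeff_unique hη0 hη1 ha (hφ a ha y) ⟨0, zero_mem _, y, hy, by simp⟩

lemma phi_add (hη0 : η ≠ 0) (hη1 : η ≠ 1)
    (hφ : ∀ a : A, IsAxis F η a → ∀ u : A, IsProjCoeff F η a u (φ a u))
    {a : A} (ha : IsAxis F η a) (u v : A) : φ a (u + v) = φ a u + φ a v := by
  obtain ⟨u0, hu0, ue, hue, hu⟩ := hφ a ha u
  obtain ⟨v0, hv0, ve, hve, hv⟩ := hφ a ha v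
  set cu := φ a u
  set cv := φ a v
  refine projCoeff_unique hη0 hη1 ha (hφ a ha (u + v))
    ⟨u0 + v0, add_mem hu0 hv0, ue + ve, add_mem hue hve, ?_⟩
  rw [hu, hv, add_smul]; abel

lemma phi_smul (hη0 : η ≠ 0) (hη1 : η ≠ 1)
    (hφ : ∀ a : A, IsAxis F η a → ∀ u : A, IsProjCoeff F η a u (φ a u))
    {a : A} (ha : IsAxis F η a) (r : F) (u : A) : φ a (r • u) = r * φ a u := by
  obtain ⟨u0, hu0, ue, hue, hu⟩ := hφ a ha u
  set cu := φ a u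
  refine projCoeff_unique hη0 hη1 ha (hφ a ha (r • u))
    ⟨r • u0, Submodule.smul_mem _ _ hu0, r • ue, Submodule.smul_mem _ _ hue, ?_⟩
  rw [hu, smul_add, smul_add, smul_smul]

/-- `φ a` as a linear map. -/
def phiLin (hη0 : η ≠ 0) (hη1 : η ≠ 1)
    (hφ : ∀ a : A, IsAxis F η a → ∀ u : A, IsProjCoeff F η a u (φ a u))
    {a : A} (ha : IsAxis F η a) : A →ₗ[F] F where
  toFun := φ a
  map_add' := phi_add hη0 hη1 hφ ha
  map_smul' := phi_smul hη0 hη1 hφ ha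

@[simp] lemma phiLin_apply (hη0 : η ≠ 0) (hη1 : η ≠ 1)
    (hφ : ∀ a : A, IsAxis F η a → ∀ u : A, IsProjCoeff F η a u (φ a u))
    {a : A} (ha : IsAxis F η a) (u : A) : phiLin hη0 hη1 hφ ha u = φ a u := rfl

end Aux2
section Aux3

set_option linter.unusedSectionVars false

variable {F : Type u} {A : Type v} [Field F] [NonUnitalNonAssocCommRing A]
  [Module F A] [SMulCommClass F A A] [IsScalarTower F A A]
  {η : F} {φ : A → A → F}

lemma phi_key (h2 : (2:F) ≠ 0) (hη0 : η ≠ 0) (hη1 : η ≠ 1)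
    (hφ : ∀ a : A, IsAxis F η a → ∀ u : A, IsProjCoeff F η a u (φ a u))
    {a b : A} (ha : IsAxis F η a) (hb : IsAxis F η b) :
    φ b a * φ a b = φ a b * φ a b := by
  obtain ⟨b0, hb0, be, hbe, hbd⟩ := hφ a ha b
  obtain ⟨a0, ha0, ae, hae, had⟩ := hφ b hb a
  set p := φ a b with hp
  set q := φ b a with hq
  have haa : a * a = a := ha.idem
  have hab0 : a * b0 = 0 := mem_eig0 hb0
  have hb0a : b0 * a = 0 := by rw [mul_comm]; exact hab0
  have habe : a * be = η • be := hbe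
  have hbea : be * a = η • be := by rw [mul_comm]; exact habe
  have hba0 : b * a0 = 0 := mem_eig0 ha0
  have hbae : b * ae = η • ae := hae
  -- decompose be * be
  have hsq : be * be ∈ eigSp F a 1 ⊔ eigSp F a 0 := ha.fee be hbe be hbe
  obtain ⟨p1, hp1, n, hn, hpn⟩ := Submodule.mem_sup.mp hsq
  rw [ha.prim, Submodule.mem_span_singleton] at hp1
  obtain ⟨β, rfl⟩ := hp1
  have hbebe : be * be = β • a + n := hpn.symm
  have hbeb0 : be * b0 = b0 * be := mul_comm _ _
  -- the idempotent equation for b, decomposed w.r.t. a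
  have hbb : b * b = (p*p + β) • a + (b0*b0 + n) + ((2*(p*η)) • be + (2:F) • (b0*be)) := by
    conv_lhs => rw [hbd]
    simp only [mul_add, add_mul, smul_mul_assoc, mul_smul_comm, haa, hab0, hb0a, habe,
      hbea, hbebe, hbeb0]
    module
  have E : (p*p + β) • a + (b0*b0 + n) + ((2*(p*η)) • be + (2:F) • (b0*be))
      = p • a + b0 + be := by
    rw [← hbb, hb.idem, hbd]
  obtain ⟨E1, E0, Eeta⟩ := eig_comp_unique hη0 hη1 ha
    (add_mem (ha.f00 b0 hb0 b0 hb0) hn) hb0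
    (add_mem (Submodule.smul_mem _ _ hbe)
      (Submodule.smul_mem _ _ (ha.fpe b0 (Submodule.mem_sup_right hb0) be hbe))) hbe E
  -- solve for b0 * be
  have hb0be : b0 * be = (2⁻¹ * (1 - 2*(p*η))) • be := by
    have h5 : (2:F) • (b0*be) = (1 - 2*(p*η)) • be := by
      rw [sub_smul, one_smul]; exact eq_sub_of_add_eq' Eeta
    calc b0*be = ((2:F)⁻¹ * 2) • (b0*be) := by rw [inv_mul_cancel₀ h2, one_smul]
    _ = (2⁻¹:F) • ((2:F) • (b0*be)) := by rw [mul_smul]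
    _ = (2⁻¹:F) • ((1 - 2*(p*η)) • be) := by rw [h5]
    _ = _ := by rw [smul_smul]
  -- b*a computed two ways
  have hba : b * a = p • a + η • be := by
    rw [mul_comm]
    conv_lhs => rw [hbd]
    rw [mul_add, mul_add, mul_smul_comm, haa, hab0, habe]
    abel
  have hba' : b * a = q • b + η • ae := by
    conv_lhs => rw [had]
    rw [mul_add, mul_add, mul_smul_comm, hb.idem, hba0, hbae]
    abel
  -- the star identity
  have hstar : b * (b * a) = ((1-η)*q) • b + η • (b * a) := by
    conv_lhs => rw [hba']
    conv_rhs => rw [hba']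
    rw [mul_add, mul_smul_comm, mul_smul_comm, hb.idem, hbae]
    module
  -- compute b * be
  have hbbe : b * be = (p*η + 2⁻¹ * (1 - 2*(p*η))) • be + (β • a + n) := by
    conv_lhs => rw [hbd]
    rw [add_mul, add_mul, smul_mul_assoc, habe, hb0be, hbebe]
    module
  -- two computations of b * (b * a)
  have hL : b * (b * a)
      = (p*p + η*β) • a + η • n + ((p*η + η*(p*η + 2⁻¹*(1 - 2*(p*η))))) • be := by
    conv_lhs => rw [hba]
    rw [mul_add, mul_smul_comm, mul_smul_comm, hba, hbbe]
    module
  have hR : b * (b * a)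
      = ((1-η)*q*p + η*p) • a + ((1-η)*q) • b0 + ((1-η)*q + η*η) • be := by
    rw [hstar, hba, hbd]
    module
  have G := hL.symm.trans hR
  have key := (eig_comp_unique hη0 hη1 ha (Submodule.smul_mem _ _ hn)
    (Submodule.smul_mem _ _ hb0) (Submodule.smul_mem _ _ hbe)
    (Submodule.smul_mem _ _ hbe) G).1
  have h1η : (1-η) ≠ 0 := sub_ne_zero.mpr (Ne.symm hη1)
  have hfin : (1-η)*(q*p) = (1-η)*(p*p) := by linear_combination η * E1 - key
  exact mul_left_cancel₀ h1η hfin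

lemma phi_symm (h2 : (2:F) ≠ 0) (hη0 : η ≠ 0) (hη1 : η ≠ 1)
    (hφ : ∀ a : A, IsAxis F η a → ∀ u : A, IsProjCoeff F η a u (φ a u))
    {a b : A} (ha : IsAxis F η a) (hb : IsAxis F η b) :
    φ a b = φ b a := by
  have k1 := phi_key h2 hη0 hη1 hφ ha hb
  have k2 := phi_key h2 hη0 hη1 hφ hb ha
  have : (φ a b - φ b a)^2 = 0 := by linear_combination (-1:F) * k1 - k2
  have := pow_eq_zero_iff (n := 2) (by norm_num) |>.mp this
  exact sub_eq_zero.mp this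

end Aux3
section Aux4

set_option linter.unusedSectionVars false

variable {F : Type u} {A : Type v} [Field F] [NonUnitalNonAssocCommRing A]
  [Module F A] [SMulCommClass F A A] [IsScalarTower F A A]
  {η : F} {φ : A → A → F}

lemma eigSp_map (e : A ≃ₗ[F] A) (hmul : ∀ x y : A, e (x * y) = e x * e y)
    (b : A) (l : F) :
    eigSp F (e b) l = (eigSp F b l).map (e : A →ₗ[F] A) := by
  ext x
  rw [Submodule.mem_map_equiv]
  change e b * x = l • x ↔ b * e.symm x = l • e.symm x
  constructor
  · intro h
    apply e.injective
    rw [hmul, e.apply_symm_apply, map_smul, e.apply_symm_apply, h]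
  · intro h
    have := congrArg e h
    rwa [hmul, e.apply_symm_apply, map_smul, e.apply_symm_apply] at this

lemma axis_map (e : A ≃ₗ[F] A) (hmul : ∀ x y : A, e (x * y) = e x * e y)
    {b : A} (hb : IsAxis F η b) : IsAxis F η (e b) where
  ne_zero := fun h => hb.ne_zero (by simpa using (map_eq_zero_iff e e.injective).mp h)
  idem := by rw [← hmul, hb.idem]
  decomp := by
    rw [eigSp_map e hmul, eigSp_map e hmul, eigSp_map e hmul, ← Submodule.map_sup,
      ← Submodule.map_sup, hb.decomp, Submodule.map_top, LinearEquiv.range]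
  prim := by
    rw [eigSp_map e hmul, hb.prim, Submodule.map_span, Set.image_singleton]
    rfl
  f11 := by
    intro x hx y hy
    rw [eigSp_map e hmul] at *
    obtain ⟨x', hx', rfl⟩ := hx
    obtain ⟨y', hy', rfl⟩ := hy
    exact ⟨x' * y', hb.f11 x' hx' y' hy', by simpa using hmul x' y'⟩
  f00 := by
    intro x hx y hy
    rw [eigSp_map e hmul] at *
    obtain ⟨x', hx', rfl⟩ := hx
    obtain ⟨y', hy', rfl⟩ := hy
    exact ⟨x' * y', hb.f00 x' hx' y' hy', by simpa using hmul x' y'⟩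
  f10 := by
    intro x hx y hy
    rw [eigSp_map e hmul] at hx hy
    obtain ⟨x', hx', rfl⟩ := hx
    obtain ⟨y', hy', rfl⟩ := hy
    simp only [LinearEquiv.coe_coe]
    rw [← hmul, hb.f10 x' hx' y' hy', map_zero]
  fpe := by
    intro x hx y hy
    rw [eigSp_map e hmul, eigSp_map e hmul, ← Submodule.map_sup] at hx
    rw [eigSp_map e hmul] at hy ⊢
    obtain ⟨x', hx', rfl⟩ := hx
    obtain ⟨y', hy', rfl⟩ := hy
    exact ⟨x' * y', hb.fpe x' hx' y' hy', by simpa using hmul x' y'⟩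
  fee := by
    intro x hx y hy
    rw [eigSp_map e hmul] at hx hy
    rw [eigSp_map e hmul, eigSp_map e hmul, ← Submodule.map_sup]
    obtain ⟨x', hx', rfl⟩ := hx
    obtain ⟨y', hy', rfl⟩ := hy
    exact ⟨x' * y', hb.fee x' hx' y' hy', by simpa using hmul x' y'⟩

lemma phi_aut (hη0 : η ≠ 0) (hη1 : η ≠ 1)
    (hφ : ∀ a : A, IsAxis F η a → ∀ u : A, IsProjCoeff F η a u (φ a u))
    (e : A ≃ₗ[F] A) (hmul : ∀ x y : A, e (x * y) = e x * e y)
    {b c : A} (hb : IsAxis F η b) : φ (e b) (e c) = φ b c := by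
  obtain ⟨c0, h0, ce, he, hcd⟩ := hφ b hb c
  set pc := φ b c with hpc
  refine projCoeff_unique hη0 hη1 (axis_map e hmul hb)
    (hφ _ (axis_map e hmul hb) _) ⟨e c0, ?_, e ce, ?_, ?_⟩
  · rw [eigSp_map e hmul]; exact Submodule.mem_map_of_mem h0
  · rw [eigSp_map e hmul]; exact Submodule.mem_map_of_mem he
  · rw [hcd, map_add, map_add, map_smul]
end Aux4
section Aux5

set_option linter.unusedSectionVars false

variable {F : Type u} {A : Type v} {ι : Type*} [Field F] [NonUnitalNonAssocCommRing A]
  [Module F A] [SMulCommClass F A A] [IsScalarTower F A A]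
  {η : F} {φ : A → A → F}

lemma Phi_axis (h2 : (2:F) ≠ 0) (hη0 : η ≠ 0) (hη1 : η ≠ 1)
    (hφ : ∀ a : A, IsAxis F η a → ∀ u : A, IsProjCoeff F η a u (φ a u))
    (bB : Module.Basis ι F A) (hax : ∀ i, IsAxis F η (bB i)) (Φ : A →ₗ[F] A →ₗ[F] F)
    (hΦ : ∀ i j, Φ (bB i) (bB j) = φ (bB i) (bB j))
    {c : A} (hc : IsAxis F η c) : ∀ u, Φ c u = φ c u := by
  have hcol : ∀ j, Φ.flip (bB j) = phiLin hη0 hη1 hφ (hax j) := fun j =>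
    bB.ext fun i => by
      show Φ (bB i) (bB j) = φ (bB j) (bB i)
      rw [hΦ i j]
      exact phi_symm h2 hη0 hη1 hφ (hax i) (hax j)
  have key : Φ c = phiLin hη0 hη1 hφ hc := bB.ext fun j => by
    have h1 : Φ c (bB j) = φ (bB j) c := DFunLike.congr_fun (hcol j) c
    show Φ c (bB j) = φ c (bB j)
    rw [h1]
    exact phi_symm h2 hη0 hη1 hφ (hax j) hc
  exact fun u => DFunLike.congr_fun key u

end Aux5
/-- An isomorphism of `A` with a Jordan algebra of Clifford type `J(V,B)`. -/
structure CliffordTypeIso (F : Type u) (A : Type v) [Field F]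
    [NonUnitalNonAssocCommRing A] [Module F A] [SMulCommClass F A A]
    [IsScalarTower F A A] where
  V : Type v
  [instAdd : AddCommGroup V]
  [instMod : Module F V]
  B : V →ₗ[F] V →ₗ[F] F
  symm : ∀ v w : V, B v w = B w v
  iso : A ≃ₗ[F] F × V
  mul_compat : ∀ x y : A, iso (x * y) = cliffMul F B (iso x) (iso y)
/-- Let `ℬ` be a basis of `A` consisting of `η`-axes and let
`(·,·)` be the bilinear form determined by `(b, c) = φ_b(c)` for `b, c ∈ ℬ`.
Then for every `η`-axis `a`, the eigenspaces `A₁(a)`, `A₀(a)`, `A_η(a)` of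
`ad_a` are pairwise orthogonal with respect to `(·,·)`. -/
theorem eigenspaces_pairwise_orthogonal
    {F : Type u} {A : Type v} {ι : Type v} [Field F] [NonUnitalNonAssocCommRing A]
    [Module F A] [SMulCommClass F A A] [IsScalarTower F A A]
    (hchar : (2 : F) ≠ 0) (η : F) (hη0 : η ≠ 0) (hη1 : η ≠ 1)
    (𝒜 : Set A) (h𝒜 : ∀ a ∈ 𝒜, IsAxis F η a)
    (hgen : NonUnitalAlgebra.adjoin F 𝒜 = ⊤)
    (bB : Module.Basis ι F A) (hax : ∀ i : ι, IsAxis F η (bB i))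
    (φ : A → A → F)
    (hφ : ∀ a : A, IsAxis F η a → ∀ u : A, IsProjCoeff F η a u (φ a u))
    (Φ : A →ₗ[F] A →ₗ[F] F)
    (hΦ : ∀ i j : ι, Φ (bB i) (bB j) = φ (bB i) (bB j)) :
    ∀ a : A, IsAxis F η a →
      (∀ x ∈ eigSp F a 1, ∀ y ∈ eigSp F a 0, Φ x y = 0) ∧
      (∀ x ∈ eigSp F a 1, ∀ y ∈ eigSp F a η, Φ x y = 0) ∧
      (∀ x ∈ eigSp F a 0, ∀ y ∈ eigSp F a η, Φ x y = 0) := by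
  intro a ha
  have hPhiAx : ∀ {c : A}, IsAxis F η c → ∀ u : A, Φ c u = φ c u :=
    fun {c} hc => Phi_axis hchar hη0 hη1 hφ bB hax Φ hΦ hc
  -- orthogonality of A₁ with the rest is immediate
  have case10 : ∀ x ∈ eigSp F a 1, ∀ y ∈ eigSp F a 0, Φ x y = 0 := by
    intro x hx y hy
    rw [ha.prim, Submodule.mem_span_singleton] at hx
    obtain ⟨c, rfl⟩ := hx
    rw [map_smul, LinearMap.smul_apply, hPhiAx ha y, phi_eig0 hη0 hη1 hφ ha hy,
      smul_zero]
  have case1e : ∀ x ∈ eigSp F a 1, ∀ y ∈ eigSp F a η, Φ x y = 0 := by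
    intro x hx y hy
    rw [ha.prim, Submodule.mem_span_singleton] at hx
    obtain ⟨c, rfl⟩ := hx
    rw [map_smul, LinearMap.smul_apply, hPhiAx ha y, phi_eigE hη0 hη1 hφ ha hy,
      smul_zero]
  refine ⟨case10, case1e, ?_⟩
  -- now build the Miyamoto involution of `a`
  have hsum : (eigSp F a 1 ⊔ eigSp F a 0) ⊔ eigSp F a η = ⊤ := ha.decomp
  have hdisj : Disjoint (eigSp F a 1 ⊔ eigSp F a 0) (eigSp F a η) := by
    rw [Submodule.disjoint_def]
    intro x hx hxe
    obtain ⟨x1, hx1, x0, hx0, hx'⟩ := Submodule.mem_sup.mp hx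
    rw [ha.prim, Submodule.mem_span_singleton] at hx1
    obtain ⟨c, rfl⟩ := hx1
    subst hx'
    have h1 : a * (c • a + x0) = c • a := by
      rw [mul_add, mul_smul_comm, ha.idem, mem_eig0 hx0, add_zero]
    have h2 : a * (c • a + x0) = η • (c • a + x0) := hxe
    have h4 : c • a = η • (c • a + x0) := h1.symm.trans h2
    have h3 : ((1 - η) * c) • a + (-η) • x0 + (0:A) = 0 := by
      calc ((1 - η) * c) • a + (-η) • x0 + (0:A) = c • a - η • (c • a + x0) := by module
      _ = 0 := by rw [← h4, sub_self]
    obtain ⟨hc, h0, -⟩ := eig_comp_zero hη0 hη1 ha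
      (Submodule.smul_mem _ _ hx0) (zero_mem _) h3
    have hc' : c = 0 := by
      rcases mul_eq_zero.mp hc with h | h
      · exact absurd (by linear_combination -h) hη1
      · exact h
    have hx0' : x0 = 0 := by
      have := smul_eq_zero.mp h0
      rcases this with h | h
      · exact absurd (neg_eq_zero.mp h) hη0
      · exact h
    rw [hc', hx0', zero_smul, zero_add]
  have hcompl : IsCompl (eigSp F a 1 ⊔ eigSp F a 0) (eigSp F a η) :=
    ⟨hdisj, codisjoint_iff.mpr hsum⟩
  set pr := Submodule.projectionOnto _ _ hcompl with hprdef
  set τ : A →ₗ[F] A :=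
    (2:F) • ((eigSp F a 1 ⊔ eigSp F a 0).subtype ∘ₗ pr) - LinearMap.id with hτdef
  have hτp : ∀ x ∈ eigSp F a 1 ⊔ eigSp F a 0, τ x = x := by
    intro x hx
    have hx' : pr x = ⟨x, hx⟩ := Submodule.projectionOnto_apply_left hcompl ⟨x, hx⟩
    simp only [hτdef, LinearMap.sub_apply, LinearMap.smul_apply, LinearMap.comp_apply,
      LinearMap.id_apply, hx', Submodule.subtype_apply]
    rw [two_smul]; abel
  have hτm : ∀ x ∈ eigSp F a η, τ x = -x := by
    intro x hx
    have hx' : pr x = 0 := Submodule.projectionOnto_apply_right hcompl ⟨x, hx⟩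
    simp only [hτdef, LinearMap.sub_apply, LinearMap.smul_apply, LinearMap.comp_apply,
      LinearMap.id_apply, hx', Submodule.subtype_apply, ZeroMemClass.coe_zero, smul_zero,
      zero_sub]
  have hdec : ∀ u : A, ∃ xp ∈ eigSp F a 1 ⊔ eigSp F a 0, ∃ xm ∈ eigSp F a η, u = xp + xm := by
    intro u
    have hu : u ∈ (eigSp F a 1 ⊔ eigSp F a 0) ⊔ eigSp F a η := hsum ▸ Submodule.mem_top
    obtain ⟨xp, hxp, xm, hxm, h⟩ := Submodule.mem_sup.mp hu
    exact ⟨xp, hxp, xm, hxm, h.symm⟩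
  have hpp : ∀ x ∈ eigSp F a 1 ⊔ eigSp F a 0, ∀ y ∈ eigSp F a 1 ⊔ eigSp F a 0,
      x * y ∈ eigSp F a 1 ⊔ eigSp F a 0 := by
    intro x hx y hy
    obtain ⟨x1, hx1, x0, hx0, hx'⟩ := Submodule.mem_sup.mp hx
    obtain ⟨y1, hy1, y0, hy0, hy'⟩ := Submodule.mem_sup.mp hy
    subst hx'; subst hy'
    have e1 : x1 * y0 = 0 := ha.f10 x1 hx1 y0 hy0
    have e2 : x0 * y1 = 0 := by rw [mul_comm]; exact ha.f10 y1 hy1 x0 hx0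
    have hex : (x1 + x0) * (y1 + y0) = x1 * y1 + x0 * y0 := by
      rw [add_mul, mul_add, mul_add, e1, e2]; abel
    rw [hex]
    exact add_mem (Submodule.mem_sup_left (ha.f11 x1 hx1 y1 hy1))
      (Submodule.mem_sup_right (ha.f00 x0 hx0 y0 hy0))
  have hτmul : ∀ x y : A, τ (x * y) = τ x * τ y := by
    intro uu vv
    obtain ⟨xp, hxp, xm, hxm, rfl⟩ := hdec uu
    obtain ⟨yp, hyp, ym, hym, rfl⟩ := hdec vv
    have m1 : xp * yp + xm * ym ∈ eigSp F a 1 ⊔ eigSp F a 0 :=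
      add_mem (hpp _ hxp _ hyp) (ha.fee _ hxm _ hym)
    have m2 : xp * ym + xm * yp ∈ eigSp F a η :=
      add_mem (ha.fpe _ hxp _ hym) (by rw [mul_comm]; exact ha.fpe _ hyp _ hxm)
    have hprod : (xp + xm) * (yp + ym) = (xp * yp + xm * ym) + (xp * ym + xm * yp) := by
      rw [add_mul, mul_add, mul_add]; abel
    rw [hprod, map_add, hτp _ m1, hτm _ m2, map_add, map_add, hτp _ hxp, hτp _ hyp,
      hτm _ hxm, hτm _ hym]
    simp only [add_mul, mul_add, mul_neg, neg_mul, neg_neg]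
    abel
  have hτinv : ∀ u, τ (τ u) = u := by
    intro u
    obtain ⟨xp, hxp, xm, hxm, rfl⟩ := hdec u
    rw [map_add, hτp _ hxp, hτm _ hxm, map_add, hτp _ hxp, map_neg, hτm _ hxm, neg_neg]
  set e : A ≃ₗ[F] A := LinearEquiv.ofLinear τ τ (LinearMap.ext hτinv) (LinearMap.ext hτinv)
    with hedef
  have he : ∀ u, e u = τ u := fun u => rfl
  have hemul : ∀ x y : A, e (x * y) = e x * e y := by
    intro x y; rw [he, he, he]; exact hτmul x y
  -- the form is τ-invariant
  have inv1 : ∀ j, (Φ.flip (τ (bB j))).comp τ = Φ.flip (bB j) := by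
    intro j
    refine bB.ext fun i => ?_
    show Φ (τ (bB i)) (τ (bB j)) = Φ (bB i) (bB j)
    rw [← he, ← he, hΦ i j]
    have hax' : IsAxis F η (e (bB i)) := axis_map e hemul (hax i)
    rw [hPhiAx hax' (e (bB j)), phi_aut hη0 hη1 hφ e hemul (hax i)]
  have inv : ∀ u v : A, Φ (τ u) (τ v) = Φ u v := by
    intro u v
    have step2 : (Φ (τ u)).comp τ = Φ u := by
      refine bB.ext fun j => ?_
      exact DFunLike.congr_fun (inv1 j) u
    exact DFunLike.congr_fun step2 v
  intro x hx y hy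
  have h := inv x y
  rw [hτp x (Submodule.mem_sup_right hx), hτm y hy, map_neg] at h
  have h2' : (2:F) * Φ x y = 0 := by linear_combination -h
  exact (mul_eq_zero.mp h2').resolve_left hchar
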